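/- Set S' = ℤ[G] ⊕ ℤ[Ω] (the last two direct summands of D'). The quotient map D' → T' restricts to a surjection (D')^H → (T')^H on H-invariants, and this map together with the projection (D')^H → (S')^H induce isomorphisms H²(G/H, (T')^H) ≅ H²(G/H, (D')^H) ≅ H²(G/H, (S')^H). -/

import Mathlib

namespace Normic

/-- For a `Γ`-set `α`, the permutation module of `M`-valued functions on `α`:
`Γ` acts by `(g • f) x = f (g⁻¹ • x)`.  For `M = ℤ` and a finite `Γ`-set `α` this is
the permutation lattice `ℤ[α]`. -/
instance funAction (Γ α M : Type*) [Group Γ] [MulAction Γ α] [AddCommGroup M] :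
    DistribMulAction Γ (α → M) where
  smul g f := fun x => f (g⁻¹ • x)
  one_smul f := by funext x; show f _ = f x; rw [inv_one, one_smul]
  mul_smul g h f := by funext x; show f _ = f _; rw [mul_inv_rev, mul_smul]
  smul_zero g := rfl
  smul_add g f₁ f₂ := rfl

lemma funAction_smul_apply {Γ α M : Type*} [Group Γ] [MulAction Γ α] [AddCommGroup M]
    (g : Γ) (f : α → M) (x : α) : (g • f) x = f (g⁻¹ • x) := rfl

section Cocycles

variable {Γ : Type*} [Group Γ] {M : Type*} [AddCommGroup M] [DistribMulAction Γ M]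

/-- Inhomogeneous 1-cocycles of `Γ` with values in `M`. -/
def IsOneCocycle (f : Γ → M) : Prop := ∀ g h : Γ, f (g * h) = g • f h + f g

/-- 1-coboundaries of `Γ` with values in `M`. -/
def IsOneCoboundary (f : Γ → M) : Prop := ∃ m : M, ∀ g : Γ, f g = g • m - m

/-- Inhomogeneous 2-cocycles of `Γ` with values in `M`. -/
def IsTwoCocycle (f : Γ → Γ → M) : Prop :=
  ∀ g h k : Γ, g • f h k - f (g * h) k + f g (h * k) - f g h = 0

/-- 2-coboundaries of `Γ` with values in `M`. -/
def IsTwoCoboundary (f : Γ → Γ → M) : Prop :=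
  ∃ a : Γ → M, ∀ g h : Γ, f g h = g • a h - a (g * h) + a g

end Cocycles

section Fixed

variable {Γ : Type*} [Group Γ] (N : Subgroup Γ)
variable (M : Type*) [AddCommGroup M] [DistribMulAction Γ M]

/-- The subgroup `M^N` of elements of `M` fixed by a subgroup `N` of `Γ`. -/
def fixedBy : AddSubgroup M where
  carrier := {m | ∀ γ ∈ N, γ • m = m}
  zero_mem' := fun γ _ => smul_zero γ
  add_mem' := by
    intro a b ha hb γ hγ
    rw [smul_add, ha γ hγ, hb γ hγ]
  neg_mem' := by
    intro a ha γ hγ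
    rw [smul_neg, ha γ hγ]

variable [N.Normal]

/-- When `N` is normal in `Γ`, the quotient `Γ/N` acts on the fixed points `M^N`. -/
instance fixedBySMul : SMul (Γ ⧸ N) (fixedBy N M) :=
  ⟨fun q m =>
    Quotient.liftOn' q
      (fun γ => (⟨γ • (m : M), by
        intro h hh
        have hconj : γ⁻¹ * h * γ ∈ N := by
          have := Subgroup.Normal.conj_mem ‹N.Normal› h hh γ⁻¹
          simpa using this
        calc h • γ • (m : M) = (h * γ) • (m : M) := (mul_smul _ _ _).symm
        _ = (γ * (γ⁻¹ * h * γ)) • (m : M) := by group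
        _ = γ • ((γ⁻¹ * h * γ) • (m : M)) := mul_smul _ _ _
        _ = γ • (m : M) := by rw [m.2 _ hconj]⟩ : fixedBy N M))
      (by
        intro γ γ' hrel
        have h : γ⁻¹ * γ' ∈ N := QuotientGroup.leftRel_apply.mp hrel
        apply Subtype.ext
        show γ • (m : M) = γ' • (m : M)
        calc γ • (m : M) = γ • ((γ⁻¹ * γ') • (m : M)) := by rw [m.2 _ h]
        _ = (γ * (γ⁻¹ * γ')) • (m : M) := (mul_smul _ _ _).symm
        _ = γ' • (m : M) := by group)⟩

lemma fixedBy_mk_smul (γ : Γ) (m : fixedBy N M) :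
    (((QuotientGroup.mk γ : Γ ⧸ N) • m : fixedBy N M) : M) = γ • (m : M) := rfl

/-- The induced action of the quotient group `Γ/N` on the fixed points `M^N`. -/
instance fixedByAction : DistribMulAction (Γ ⧸ N) (fixedBy N M) where
  one_smul m := by
    apply Subtype.ext
    show (1 : Γ) • (m : M) = (m : M)
    rw [one_smul]
  mul_smul q q' m := by
    induction q using QuotientGroup.induction_on with
    | H γ =>
    induction q' using QuotientGroup.induction_on with
    | H γ' =>
    apply Subtype.ext
    show (γ * γ') • (m : M) = γ • γ' • (m : M)
    rw [mul_smul]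
  smul_zero q := by
    induction q using QuotientGroup.induction_on with
    | H γ =>
    apply Subtype.ext
    show γ • (0 : M) = (0 : M)
    rw [smul_zero]
  smul_add q m m' := by
    induction q using QuotientGroup.induction_on with
    | H γ =>
    apply Subtype.ext
    show γ • ((m : M) + (m' : M)) = γ • (m : M) + γ • (m' : M)
    rw [smul_add]

end Fixed

section ContextA

variable (G : Type*) [Group G] [Fintype G] [DecidableEq G] (H : Subgroup G) (l : ℕ)

/-- `e' = gcd(n, m)`, where `n = #G` and `m = l·[G:H]` is the degree of `P(t)`. -/
noncomputable def ePrime : ℕ := Nat.gcd (Fintype.card G) (l * H.index)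

/-- The `G`-set `Ω` of all subsets of `Z_K = G` of cardinality `e'`, with `G` acting by
left translation of subsets. -/
def Om : Type _ := {s : Finset G // s.card = ePrime G H l}

instance : MulAction G (Om G H l) where
  smul g s := ⟨s.1.image (g * ·), by
    rw [Finset.card_image_of_injective _ (mul_right_injective g)]; exact s.2⟩
  one_smul s := Subtype.ext (by
    show Finset.image ((1 : G) * ·) s.1 = s.1
    simp)
  mul_smul g h s := Subtype.ext (by
    show Finset.image _ _ = Finset.image _ (Finset.image _ _)
    rw [Finset.image_image]
    exact Finset.image_congr (fun x _ => by simp [Function.comp, mul_assoc]))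

/-- The `G`-lattice `D' = (ℤ[G/H] ⊗ ℤ[G]) ⊕ ℤ[G] ⊕ ℤ[Ω]`, realized concretely as
integer-valued functions (`ℤ[G/H] ⊗ ℤ[G]` is the permutation lattice on `G/H × G`, with
the diagonal `G`-action on the tensor factor). -/
abbrev Dp : Type _ := (((G ⧸ H) × G) → ℤ) × ((G → ℤ) × (Om G H l → ℤ))

/-- The injective `G`-equivariant map `f' : ℤ[G/H] → D'`, sending a coset `τ` to
`(τ ⊗ N_G, −l·N_G, −l·S_K)`, where `N_G = Σ_{g∈G} g` and `S_K = Σ_{M∈Ω} M`. -/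
noncomputable def fp : ((G ⧸ H) → ℤ) →+ Dp G H l :=
  AddMonoidHom.mk' (fun x =>
    (fun p => x p.1,
     fun _ => -(l : ℤ) * ∑ᶠ τ, x τ,
     fun _ => -(l : ℤ) * ∑ᶠ τ, x τ)) (by
    intro x y
    have hsum : ∑ᶠ τ, (x τ + y τ) = (∑ᶠ τ, x τ) + ∑ᶠ τ, y τ :=
      finsum_add_distrib (Set.toFinite _) (Set.toFinite _)
    refine Prod.ext ?_ (Prod.ext ?_ ?_) <;> funext p <;>
      simp [hsum] <;> ring)

lemma fp_apply (x : (G ⧸ H) → ℤ) :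
    fp G H l x =
      (fun p => x p.1,
       fun _ => -(l : ℤ) * ∑ᶠ τ, x τ,
       fun _ => -(l : ℤ) * ∑ᶠ τ, x τ) := rfl

lemma fp_equivariant (g : G) (x : (G ⧸ H) → ℤ) :
    fp G H l (g • x) = g • fp G H l x := by
  have hre : ∑ᶠ τ, x (g⁻¹ • τ) = ∑ᶠ τ, x τ :=
    finsum_eq_of_bijective (fun τ => g⁻¹ • τ) (MulAction.bijective g⁻¹) (fun τ => rfl)
  refine Prod.ext ?_ (Prod.ext ?_ ?_) <;> funext p <;>
    simp only [fp_apply, funAction_smul_apply, Prod.smul_fst, Prod.smul_snd, hre]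

/-- The `G`-lattice `T'`, defined as the cokernel of `f' : ℤ[G/H] → D'`. -/
noncomputable abbrev Tp := Dp G H l ⧸ (fp G H l).range

noncomputable instance : SMul G (Tp G H l) :=
  ⟨fun g => QuotientAddGroup.map _ _ (DistribMulAction.toAddMonoidHom (Dp G H l) g) (by
    rintro _ ⟨x, rfl⟩
    exact ⟨g • x, (fp_equivariant G H l g x)⟩)⟩

lemma Tp_smul_mk (g : G) (d : Dp G H l) :
    g • (QuotientAddGroup.mk d : Tp G H l) = QuotientAddGroup.mk (g • d) := rfl

/-- The `G`-action on the cokernel `T'`. -/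
noncomputable instance : DistribMulAction G (Tp G H l) where
  one_smul x := by
    induction x using QuotientAddGroup.induction_on with
    | H d => rw [Tp_smul_mk, one_smul]
  mul_smul g g' x := by
    induction x using QuotientAddGroup.induction_on with
    | H d => rw [Tp_smul_mk, Tp_smul_mk, Tp_smul_mk, mul_smul]
  smul_zero g :=
    map_zero (QuotientAddGroup.map _ _ (DistribMulAction.toAddMonoidHom (Dp G H l) g) _)
  smul_add g x y :=
    map_add (QuotientAddGroup.map _ _ (DistribMulAction.toAddMonoidHom (Dp G H l) g) _) x y

end ContextA

section Stmt4

variable (G : Type*) [Group G] [Fintype G] [DecidableEq G] (H : Subgroup G) (l : ℕ)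

/-- The `G`-lattice `S' = ℤ[G] ⊕ ℤ[Ω]`, the last two direct summands of `D'`. -/
abbrev Sp : Type _ := (G → ℤ) × (Om G H l → ℤ)

/-- The map `(D')^H → (T')^H` on `H`-invariants obtained by restricting the quotient map
`D' → T' = coker(f')`. -/
noncomputable def quotF (d : fixedBy H (Dp G H l)) : fixedBy H (Tp G H l) :=
  ⟨QuotientAddGroup.mk (d : Dp G H l), by
    intro g hg
    rw [Tp_smul_mk, d.2 g hg]⟩

/-- The map `(D')^H → (S')^H` on `H`-invariants obtained by restricting the projection
`D' → S'` onto the last two direct summands. -/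
def projF (d : fixedBy H (Dp G H l)) : fixedBy H (Sp G H l) :=
  ⟨(d : Dp G H l).2, by
    intro g hg
    have := congrArg Prod.snd (d.2 g hg)
    simpa using this⟩

end Stmt4

section Proof4

variable {Γ : Type*} [Group Γ] {M : Type*} [AddCommGroup M] [DistribMulAction Γ M]

lemma isTwoCocycle_delta (a : Γ → M) :
    IsTwoCocycle (fun g h => g • a h - a (g * h) + a g) := by
  intro g h k
  simp only [smul_sub, smul_add, ← mul_smul, mul_assoc]
  abel

lemma IsTwoCocycle.sub' {f f' : Γ → Γ → M} (hf : IsTwoCocycle f) (hf' : IsTwoCocycle f') :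
    IsTwoCocycle (fun g h => f g h - f' g h) := by
  intro g h k
  have h1 := hf g h k
  have h2 := hf' g h k
  calc g • (f h k - f' h k) - (f (g * h) k - f' (g * h) k) + (f g (h * k) - f' g (h * k))
        - (f g h - f' g h)
      = (g • f h k - f (g * h) k + f g (h * k) - f g h)
          - (g • f' h k - f' (g * h) k + f' g (h * k) - f' g h) := by
        simp only [smul_sub]; abel
    _ = 0 := by rw [h1, h2, sub_zero]

lemma deltadelta (d : Γ → Γ → M) (g h k m : Γ) :
    g • (h • d k m - d (h * k) m + d h (k * m) - d h k)
      - ((g * h) • d k m - d (g * h * k) m + d (g * h) (k * m) - d (g * h) k)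
      + (g • d (h * k) m - d (g * (h * k)) m + d g (h * k * m) - d g (h * k))
      - (g • d h (k * m) - d (g * h) (k * m) + d g (h * (k * m)) - d g h)
      + (g • d h k - d (g * h) k + d g (h * k) - d g h) = 0 := by
  simp only [smul_sub, smul_add, ← mul_smul, mul_assoc]
  abel

lemma isTwoCoboundary_zero : IsTwoCoboundary (fun (_ _ : Γ) => (0 : M)) :=
  ⟨fun _ => 0, fun g h => by rw [smul_zero]; abel⟩

lemma coind2 (x : Γ → Γ → Γ → ℤ)
    (hx : ∀ γ1 γ2 γ3 τ,
      x γ2 γ3 (γ1⁻¹ * τ) - x (γ1 * γ2) γ3 τ + x γ1 (γ2 * γ3) τ - x γ1 γ2 τ = 0)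
    (γ1 γ2 τ : Γ) :
    x γ1 γ2 τ = x (τ⁻¹ * γ1) γ2 1 - x τ⁻¹ (γ1 * γ2) 1 + x τ⁻¹ γ1 1 := by
  have := hx τ⁻¹ γ1 γ2 1
  rw [inv_inv, mul_one] at this
  linarith

lemma coind3 (y : Γ → Γ → Γ → Γ → ℤ)
    (hy : ∀ γ1 γ2 γ3 γ4 τ,
      y γ2 γ3 γ4 (γ1⁻¹ * τ) - y (γ1 * γ2) γ3 γ4 τ + y γ1 (γ2 * γ3) γ4 τ
        - y γ1 γ2 (γ3 * γ4) τ + y γ1 γ2 γ3 τ = 0)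
    (γ1 γ2 γ3 τ : Γ) :
    y γ1 γ2 γ3 τ = y (τ⁻¹ * γ1) γ2 γ3 1 - y τ⁻¹ (γ1 * γ2) γ3 1 + y τ⁻¹ γ1 (γ2 * γ3) 1
      - y τ⁻¹ γ1 γ2 1 := by
  have := hy τ⁻¹ γ1 γ2 γ3 1
  rw [inv_inv, mul_one] at this
  linarith

end Proof4

section Proof4b

variable (G : Type) [Group G] [Fintype G] [DecidableEq G] (H : Subgroup G) [H.Normal]
  (l : ℕ)

lemma coset_triv {h : G} (hh : h ∈ H) (τ : G ⧸ H) : h • τ = τ := by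
  induction τ using QuotientGroup.induction_on with
  | H a =>
    show QuotientGroup.mk (h * a) = QuotientGroup.mk a
    rw [QuotientGroup.eq]
    have := Subgroup.Normal.conj_mem ‹H.Normal› h⁻¹ (inv_mem hh) a⁻¹
    simpa [mul_inv_rev, mul_assoc] using this

lemma mk_smul_coset (g : G) (τ : G ⧸ H) :
    g • τ = (QuotientGroup.mk g : G ⧸ H) * τ := by
  induction τ using QuotientGroup.induction_on with
  | H a => rfl

lemma fun_triv {h : G} (hh : h ∈ H) (x : (G ⧸ H) → ℤ) : h • x = x :=
  funext fun τ => by rw [funAction_smul_apply, coset_triv G H (inv_mem hh)]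

lemma fp_inj {x y : (G ⧸ H) → ℤ} (hxy : fp G H l x = fp G H l y) : x = y := by
  funext τ
  exact congrFun (congrArg Prod.fst hxy) (τ, 1)

lemma fp_zero_of {x : (G ⧸ H) → ℤ} (hx : fp G H l x = 0) : x = 0 :=
  fp_inj G H l (by rw [hx, map_zero])

lemma fp_hfix {h : G} (hh : h ∈ H) (x : (G ⧸ H) → ℤ) :
    h • fp G H l x = fp G H l x := by
  rw [← fp_equivariant, fun_triv G H hh]

lemma fp_mem_fixed (x : (G ⧸ H) → ℤ) : fp G H l x ∈ fixedBy H (Dp G H l) := by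
  intro h hh
  exact fp_hfix G H l hh x

end Proof4b
section Proof4c
set_option linter.unusedSectionVars false

variable (G : Type) [Group G] [Fintype G] [DecidableEq G] (H : Subgroup G) [H.Normal]
  (l : ℕ)

lemma quotF_coe (m : fixedBy H (Dp G H l)) :
    (quotF G H l m : Tp G H l) = QuotientAddGroup.mk (m : Dp G H l) := rfl

lemma quotF_add (m m' : fixedBy H (Dp G H l)) :
    quotF G H l (m + m') = quotF G H l m + quotF G H l m' := Subtype.ext rfl

lemma quotF_sub (m m' : fixedBy H (Dp G H l)) :
    quotF G H l (m - m') = quotF G H l m - quotF G H l m' := Subtype.ext rfl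

lemma quotF_smul (γ : G ⧸ H) (m : fixedBy H (Dp G H l)) :
    quotF G H l (γ • m) = γ • quotF G H l m := by
  induction γ using QuotientGroup.induction_on with
  | H g =>
    apply Subtype.ext
    show QuotientAddGroup.mk
        (((QuotientGroup.mk g : G ⧸ H) • m : fixedBy H (Dp G H l)) : Dp G H l)
      = (((QuotientGroup.mk g : G ⧸ H) • quotF G H l m : fixedBy H (Tp G H l)) : Tp G H l)
    rw [fixedBy_mk_smul H (Dp G H l), fixedBy_mk_smul H (Tp G H l), quotF_coe, Tp_smul_mk]

lemma projF_coe (m : fixedBy H (Dp G H l)) :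
    (projF G H l m : Sp G H l) = (m : Dp G H l).2 := rfl

lemma projF_add (m m' : fixedBy H (Dp G H l)) :
    projF G H l (m + m') = projF G H l m + projF G H l m' := Subtype.ext rfl

lemma projF_sub (m m' : fixedBy H (Dp G H l)) :
    projF G H l (m - m') = projF G H l m - projF G H l m' := Subtype.ext rfl

lemma projF_smul (γ : G ⧸ H) (m : fixedBy H (Dp G H l)) :
    projF G H l (γ • m) = γ • projF G H l m := by
  induction γ using QuotientGroup.induction_on with
  | H g =>
    apply Subtype.ext
    show (((QuotientGroup.mk g : G ⧸ H) • m : fixedBy H (Dp G H l)) : Dp G H l).2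
      = (((QuotientGroup.mk g : G ⧸ H) • projF G H l m : fixedBy H (Sp G H l)) : Sp G H l)
    rw [fixedBy_mk_smul H (Dp G H l), fixedBy_mk_smul H (Sp G H l), projF_coe]
    rfl

lemma quotF_surj : Function.Surjective (quotF G H l) := by
  rintro ⟨tv, htv⟩
  revert htv
  induction tv using QuotientAddGroup.induction_on with
  | H d =>
    intro htv
    have key : ∀ h ∈ H, h • d = d := by
      intro h hh
      have hmk : (QuotientAddGroup.mk (h • d) : Tp G H l) = QuotientAddGroup.mk d := by
        have := htv h hh
        rwa [Tp_smul_mk] at this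
      have hmem : h • d - d ∈ (fp G H l).range :=
        (QuotientAddGroup.eq_iff_sub_mem).mp hmk
      obtain ⟨v, hv⟩ := hmem
      have pow : ∀ k : ℕ, h ^ k • d = d + fp G H l (k • v) := by
        intro k
        induction k with
        | zero => simp
        | succ n ih =>
          have hps : h ^ (n + 1) = h * h ^ n := by rw [pow_succ']
          have hhd : h • d = d + fp G H l v := by
            rw [hv]; abel
          rw [hps, mul_smul, ih, smul_add, hhd, (fp G H l).map_nsmul, smul_comm h n,
            fp_hfix G H l hh,
            ← (fp G H l).map_nsmul, succ_nsmul, map_add]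
          abel
      have hord := pow (orderOf h)
      rw [pow_orderOf_eq_one, one_smul, left_eq_add] at hord
      have hv0 : (orderOf h) • v = 0 := fp_zero_of G H l hord
      have hvz : v = 0 := by
        funext τ
        have := congrFun hv0 τ
        have hne : (orderOf h : ℤ) ≠ 0 := by
          exact_mod_cast (orderOf_pos h).ne'
        have : (orderOf h : ℤ) * v τ = 0 := by
          simpa [nsmul_eq_mul] using this
        exact (mul_eq_zero.mp this).resolve_left hne
      have : h • d - d = 0 := by rw [← hv, hvz, map_zero]
      rw [sub_eq_zero] at this
      exact this
    exact ⟨⟨d, key⟩, Subtype.ext rfl⟩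

lemma quotF_ker {v : fixedBy H (Dp G H l)} (hv : quotF G H l v = 0) :
    ∃ x, (v : Dp G H l) = fp G H l x := by
  have h0 : (quotF G H l v : Tp G H l) = 0 := by rw [hv]; rfl
  rw [quotF_coe, QuotientAddGroup.eq_zero_iff] at h0
  obtain ⟨x, hx⟩ := h0
  exact ⟨x, hx.symm⟩

end Proof4c
section Proof4d
set_option linter.unusedSectionVars false

variable (G : Type) [Group G] [Fintype G] [DecidableEq G] (H : Subgroup G) [H.Normal]
  (l : ℕ)

lemma cocycle_coe {f : (G ⧸ H) → (G ⧸ H) → fixedBy H (Dp G H l)} (hf : IsTwoCocycle f)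
    (g₁ : G) (γ2 γ3 : G ⧸ H) :
    g₁ • (f γ2 γ3 : Dp G H l) - (f (QuotientGroup.mk g₁ * γ2) γ3 : Dp G H l)
      + (f (QuotientGroup.mk g₁) (γ2 * γ3) : Dp G H l)
      - (f (QuotientGroup.mk g₁) γ2 : Dp G H l) = 0 := by
  have h0 := hf (QuotientGroup.mk g₁) γ2 γ3
  have h1 := congrArg (fun z : fixedBy H (Dp G H l) => (z : Dp G H l)) h0
  simpa [fixedBy_mk_smul H (Dp G H l)] using h1

lemma quotF_H2_inj (f : (G ⧸ H) → (G ⧸ H) → fixedBy H (Dp G H l)) (hf : IsTwoCocycle f)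
    (hb : IsTwoCoboundary (fun a b => quotF G H l (f a b))) : IsTwoCoboundary f := by
  obtain ⟨a, ha⟩ := hb
  choose atil hatil using fun γ => quotF_surj G H l (a γ)
  set r : (G ⧸ H) → (G ⧸ H) → fixedBy H (Dp G H l) :=
    fun γ1 γ2 => f γ1 γ2 - (γ1 • atil γ2 - atil (γ1 * γ2) + atil γ1) with hrdef
  have hrc : IsTwoCocycle r := hf.sub' (isTwoCocycle_delta atil)
  have hrz : ∀ γ1 γ2, quotF G H l (r γ1 γ2) = 0 := by
    intro γ1 γ2
    have : r γ1 γ2 = f γ1 γ2 - (γ1 • atil γ2 - atil (γ1 * γ2) + atil γ1) := rfl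
    rw [this]
    simp only [quotF_sub, quotF_add, quotF_smul, hatil]
    exact sub_eq_zero.mpr (ha γ1 γ2)
  choose x hx using fun γ1 γ2 => quotF_ker G H l (hrz γ1 γ2)
  have hxid : ∀ γ1 γ2 γ3 (τ : G ⧸ H),
      x γ2 γ3 (γ1⁻¹ * τ) - x (γ1 * γ2) γ3 τ + x γ1 (γ2 * γ3) τ - x γ1 γ2 τ = 0 := by
    intro γ1 γ2 γ3 τ
    induction γ1 using QuotientGroup.induction_on with
    | H g₁ =>
      have h1 := cocycle_coe G H l hrc g₁ γ2 γ3
      rw [hx, hx, hx, hx, ← fp_equivariant, ← map_sub, ← map_add, ← map_sub] at h1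
      have h2 := congrFun (fp_zero_of G H l h1) τ
      simp only [Pi.sub_apply, Pi.add_apply, Pi.zero_apply, funAction_smul_apply] at h2
      rw [mk_smul_coset, QuotientGroup.mk_inv] at h2
      exact h2
  have hconc := coind2 x hxid
  set b : (G ⧸ H) → ((G ⧸ H) → ℤ) := fun γ => fun τ => x τ⁻¹ γ 1 with hbdef
  set B : (G ⧸ H) → fixedBy H (Dp G H l) :=
    fun γ => ⟨fp G H l (b γ), fp_mem_fixed G H l (b γ)⟩ with hBdef
  refine ⟨fun γ => atil γ + B γ, ?_⟩
  intro γ1 γ2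
  have hδB : γ1 • B γ2 - B (γ1 * γ2) + B γ1 = r γ1 γ2 := by
    induction γ1 using QuotientGroup.induction_on with
    | H g₁ =>
      apply Subtype.ext
      have hcoeL : (((QuotientGroup.mk g₁ : G ⧸ H) • B γ2
            - B ((QuotientGroup.mk g₁ : G ⧸ H) * γ2)
            + B (QuotientGroup.mk g₁ : G ⧸ H) : fixedBy H (Dp G H l)) : Dp G H l)
          = fp G H l (g₁ • b γ2 - b (QuotientGroup.mk g₁ * γ2)
              + b (QuotientGroup.mk g₁)) := by
        simp [hBdef, fixedBy_mk_smul H (Dp G H l), fp_equivariant, map_add, map_sub]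
      rw [hcoeL, hx]
      congr 1
      funext τ
      have h3 := hconc (QuotientGroup.mk g₁) γ2 τ
      simp only [Pi.sub_apply, Pi.add_apply, funAction_smul_apply, hbdef]
      rw [mk_smul_coset, QuotientGroup.mk_inv, mul_inv_rev, inv_inv]
      linarith
  have hrr : f γ1 γ2 = r γ1 γ2 + (γ1 • atil γ2 - atil (γ1 * γ2) + atil γ1) := by
    have : r γ1 γ2 = f γ1 γ2 - (γ1 • atil γ2 - atil (γ1 * γ2) + atil γ1) := rfl
    rw [this]; abel
  rw [hrr, ← hδB, smul_add]
  beta_reduce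
  abel

end Proof4d
section Proof4e
set_option linter.unusedSectionVars false
set_option synthInstance.maxHeartbeats 1000000
set_option maxHeartbeats 1000000

variable (G : Type) [Group G] [Fintype G] [DecidableEq G] (H : Subgroup G) [H.Normal]
  (l : ℕ)

lemma quotF_H2_surj (c : (G ⧸ H) → (G ⧸ H) → fixedBy H (Tp G H l))
    (hc : IsTwoCocycle c) :
    ∃ f : (G ⧸ H) → (G ⧸ H) → fixedBy H (Dp G H l), IsTwoCocycle f ∧
      IsTwoCoboundary (fun a b => quotF G H l (f a b) - c a b) := by
  choose d hd using fun γ1 γ2 => quotF_surj G H l (c γ1 γ2)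
  set W : (G ⧸ H) → (G ⧸ H) → (G ⧸ H) → fixedBy H (Dp G H l) :=
    fun γ1 γ2 γ3 => γ1 • d γ2 γ3 - d (γ1 * γ2) γ3 + d γ1 (γ2 * γ3) - d γ1 γ2 with hWdef
  have hWq : ∀ γ1 γ2 γ3, quotF G H l (W γ1 γ2 γ3) = 0 := by
    intro γ1 γ2 γ3
    have e : W γ1 γ2 γ3 = γ1 • d γ2 γ3 - d (γ1 * γ2) γ3 + d γ1 (γ2 * γ3) - d γ1 γ2 := rfl
    rw [e]
    simp only [quotF_sub, quotF_add, quotF_smul, hd]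
    exact hc γ1 γ2 γ3
  choose y hy using fun γ1 γ2 γ3 => quotF_ker G H l (hWq γ1 γ2 γ3)
  have hWδ : ∀ γ1 γ2 γ3 γ4,
      γ1 • W γ2 γ3 γ4 - W (γ1 * γ2) γ3 γ4 + W γ1 (γ2 * γ3) γ4
        - W γ1 γ2 (γ3 * γ4) + W γ1 γ2 γ3 = 0 :=
    fun γ1 γ2 γ3 γ4 => deltadelta d γ1 γ2 γ3 γ4
  have hyid : ∀ γ1 γ2 γ3 γ4 (τ : G ⧸ H),
      y γ2 γ3 γ4 (γ1⁻¹ * τ) - y (γ1 * γ2) γ3 γ4 τ + y γ1 (γ2 * γ3) γ4 τ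
        - y γ1 γ2 (γ3 * γ4) τ + y γ1 γ2 γ3 τ = 0 := by
    intro γ1 γ2 γ3 γ4 τ
    induction γ1 using QuotientGroup.induction_on with
    | H g₁ =>
      have h0 := hWδ (QuotientGroup.mk g₁) γ2 γ3 γ4
      have h1 : g₁ • (W γ2 γ3 γ4 : Dp G H l)
          - (W ((QuotientGroup.mk g₁ : G ⧸ H) * γ2) γ3 γ4 : Dp G H l)
          + (W (QuotientGroup.mk g₁ : G ⧸ H) (γ2 * γ3) γ4 : Dp G H l)
          - (W (QuotientGroup.mk g₁ : G ⧸ H) γ2 (γ3 * γ4) : Dp G H l)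
          + (W (QuotientGroup.mk g₁ : G ⧸ H) γ2 γ3 : Dp G H l) = 0 := by
        have h1' := congrArg (fun z : fixedBy H (Dp G H l) => (z : Dp G H l)) h0
        simpa [fixedBy_mk_smul H (Dp G H l)] using h1'
      rw [hy, hy, hy, hy, hy, ← fp_equivariant, ← map_sub, ← map_add, ← map_sub,
        ← map_add] at h1
      have h2 := congrFun (fp_zero_of G H l h1) τ
      simp only [Pi.sub_apply, Pi.add_apply, Pi.zero_apply, funAction_smul_apply] at h2
      rw [mk_smul_coset, QuotientGroup.mk_inv] at h2
      exact h2
  have hconc := coind3 y hyid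
  set z : (G ⧸ H) → (G ⧸ H) → ((G ⧸ H) → ℤ) :=
    fun γ1 γ2 => fun τ => y τ⁻¹ γ1 γ2 1 with hzdef
  set Z : (G ⧸ H) → (G ⧸ H) → fixedBy H (Dp G H l) :=
    fun γ1 γ2 => ⟨fp G H l (z γ1 γ2), fp_mem_fixed G H l (z γ1 γ2)⟩ with hZdef
  have hZW : ∀ γ1 γ2 γ3,
      γ1 • Z γ2 γ3 - Z (γ1 * γ2) γ3 + Z γ1 (γ2 * γ3) - Z γ1 γ2 = W γ1 γ2 γ3 := by
    intro γ1 γ2 γ3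
    induction γ1 using QuotientGroup.induction_on with
    | H g₁ =>
      apply Subtype.ext
      have hcoeL : (((QuotientGroup.mk g₁ : G ⧸ H) • Z γ2 γ3
            - Z ((QuotientGroup.mk g₁ : G ⧸ H) * γ2) γ3
            + Z (QuotientGroup.mk g₁ : G ⧸ H) (γ2 * γ3)
            - Z (QuotientGroup.mk g₁ : G ⧸ H) γ2 : fixedBy H (Dp G H l)) : Dp G H l)
          = fp G H l (g₁ • z γ2 γ3 - z ((QuotientGroup.mk g₁ : G ⧸ H) * γ2) γ3
              + z (QuotientGroup.mk g₁ : G ⧸ H) (γ2 * γ3)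
              - z (QuotientGroup.mk g₁ : G ⧸ H) γ2) := by
        simp [hZdef, fixedBy_mk_smul H (Dp G H l), fp_equivariant, map_add, map_sub]
      rw [hcoeL, hy]
      congr 1
      funext τ
      have h3 := hconc (QuotientGroup.mk g₁) γ2 γ3 τ
      simp only [Pi.sub_apply, Pi.add_apply, funAction_smul_apply, hzdef]
      rw [mk_smul_coset, QuotientGroup.mk_inv, mul_inv_rev, inv_inv]
      linarith
  refine ⟨fun γ1 γ2 => d γ1 γ2 - Z γ1 γ2, ?_, ?_⟩
  · intro γ1 γ2 γ3
    show γ1 • (d γ2 γ3 - Z γ2 γ3) - (d (γ1 * γ2) γ3 - Z (γ1 * γ2) γ3)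
        + (d γ1 (γ2 * γ3) - Z γ1 (γ2 * γ3)) - (d γ1 γ2 - Z γ1 γ2) = 0
    have e1 : γ1 • (d γ2 γ3 - Z γ2 γ3) - (d (γ1 * γ2) γ3 - Z (γ1 * γ2) γ3)
        + (d γ1 (γ2 * γ3) - Z γ1 (γ2 * γ3)) - (d γ1 γ2 - Z γ1 γ2)
        = W γ1 γ2 γ3 - (γ1 • Z γ2 γ3 - Z (γ1 * γ2) γ3 + Z γ1 (γ2 * γ3) - Z γ1 γ2) := by
      have e : W γ1 γ2 γ3 = γ1 • d γ2 γ3 - d (γ1 * γ2) γ3 + d γ1 (γ2 * γ3) - d γ1 γ2 := rfl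
      rw [e]
      simp only [smul_sub]
      abel
    rw [e1, hZW, sub_self]
  · refine ⟨0, ?_⟩
    intro γ1 γ2
    have hZq : quotF G H l (Z γ1 γ2) = 0 := by
      apply Subtype.ext
      show (quotF G H l (Z γ1 γ2) : Tp G H l) = 0
      rw [quotF_coe]
      exact (QuotientAddGroup.eq_zero_iff _).mpr ⟨z γ1 γ2, rfl⟩
    have hz0 : γ1 • (0 : fixedBy H (Tp G H l)) = 0 := smul_zero γ1
    show quotF G H l (d γ1 γ2 - Z γ1 γ2) - c γ1 γ2
        = γ1 • (0 : fixedBy H (Tp G H l)) - 0 + 0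
    rw [quotF_sub, hZq, hd, hz0]
    abel

end Proof4e
section Proof4g
set_option linter.unusedSectionVars false
set_option synthInstance.maxHeartbeats 1000000
set_option maxHeartbeats 1000000

variable (G : Type) [Group G] [Fintype G] [DecidableEq G] (H : Subgroup G) [H.Normal]
  (l : ℕ)

lemma cocycle_coe' {M : Type} [AddCommGroup M] [DistribMulAction G M]
    {f : (G ⧸ H) → (G ⧸ H) → fixedBy H M} (hf : IsTwoCocycle f)
    (g₁ : G) (γ2 γ3 : G ⧸ H) :
    g₁ • (f γ2 γ3 : M) - (f ((QuotientGroup.mk g₁ : G ⧸ H) * γ2) γ3 : M)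
      + (f (QuotientGroup.mk g₁) (γ2 * γ3) : M)
      - (f (QuotientGroup.mk g₁) γ2 : M) = 0 := by
  have h0 := hf (QuotientGroup.mk g₁ : G ⧸ H) γ2 γ3
  have h1 := congrArg (fun z : fixedBy H M => (z : M)) h0
  simpa [fixedBy_mk_smul H M] using h1

lemma coindD2 (u : (G ⧸ H) → (G ⧸ H) → (((G ⧸ H) × G) → ℤ))
    (hu : ∀ (g₁ : G) (γ2 γ3 : G ⧸ H) (τ : G ⧸ H) (a : G),
      u γ2 γ3 (g₁⁻¹ • τ, g₁⁻¹ * a) - u ((QuotientGroup.mk g₁ : G ⧸ H) * γ2) γ3 (τ, a)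
        + u (QuotientGroup.mk g₁ : G ⧸ H) (γ2 * γ3) (τ, a)
        - u (QuotientGroup.mk g₁ : G ⧸ H) γ2 (τ, a) = 0)
    (γ1 γ2 : G ⧸ H) (τ : G ⧸ H) (a : G) :
    u γ1 γ2 (τ, a)
      = u ((QuotientGroup.mk a⁻¹ : G ⧸ H) * γ1) γ2 (a⁻¹ • τ, 1)
        - u (QuotientGroup.mk a⁻¹ : G ⧸ H) (γ1 * γ2) (a⁻¹ • τ, 1)
        + u (QuotientGroup.mk a⁻¹ : G ⧸ H) γ1 (a⁻¹ • τ, 1) := by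
  have h0 := hu a⁻¹ γ1 γ2 (a⁻¹ • τ) 1
  rw [inv_inv, mul_one, smul_inv_smul] at h0
  linarith

lemma sp_embed_mem (s : fixedBy H (Sp G H l)) :
    ((0, (s : Sp G H l)) : Dp G H l) ∈ fixedBy H (Dp G H l) := by
  intro h hh
  refine Prod.ext ?_ ?_
  · show h • (0 : ((G ⧸ H) × G) → ℤ) = 0
    exact smul_zero h
  · exact s.2 h hh

lemma projF_H2_surj (c : (G ⧸ H) → (G ⧸ H) → fixedBy H (Sp G H l))
    (hc : IsTwoCocycle c) :
    ∃ f : (G ⧸ H) → (G ⧸ H) → fixedBy H (Dp G H l), IsTwoCocycle f ∧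
      IsTwoCoboundary (fun a b => projF G H l (f a b) - c a b) := by
  refine ⟨fun γ1 γ2 => ⟨(0, (c γ1 γ2 : Sp G H l)), sp_embed_mem G H l (c γ1 γ2)⟩, ?_, ?_⟩
  · intro γ1 γ2 γ3
    induction γ1 using QuotientGroup.induction_on with
    | H g₁ =>
      apply Subtype.ext
      have hL : (((QuotientGroup.mk g₁ : G ⧸ H) •
            (⟨(0, (c γ2 γ3 : Sp G H l)), sp_embed_mem G H l (c γ2 γ3)⟩ :
              fixedBy H (Dp G H l))
          - ⟨(0, (c ((QuotientGroup.mk g₁ : G ⧸ H) * γ2) γ3 : Sp G H l)),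
              sp_embed_mem G H l _⟩
          + ⟨(0, (c (QuotientGroup.mk g₁ : G ⧸ H) (γ2 * γ3) : Sp G H l)),
              sp_embed_mem G H l _⟩
          - ⟨(0, (c (QuotientGroup.mk g₁ : G ⧸ H) γ2 : Sp G H l)),
              sp_embed_mem G H l _⟩ : fixedBy H (Dp G H l)) : Dp G H l)
          = g₁ • ((0, (c γ2 γ3 : Sp G H l)) : Dp G H l)
            - (0, (c ((QuotientGroup.mk g₁ : G ⧸ H) * γ2) γ3 : Sp G H l))
            + (0, (c (QuotientGroup.mk g₁ : G ⧸ H) (γ2 * γ3) : Sp G H l))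
            - (0, (c (QuotientGroup.mk g₁ : G ⧸ H) γ2 : Sp G H l)) := by
        simp [fixedBy_mk_smul H (Dp G H l)]
      rw [hL]
      refine Prod.ext ?_ ?_
      · show g₁ • (0 : ((G ⧸ H) × G) → ℤ) - 0 + 0 - 0 = 0
        simp
      · show g₁ • (c γ2 γ3 : Sp G H l)
            - (c ((QuotientGroup.mk g₁ : G ⧸ H) * γ2) γ3 : Sp G H l)
            + (c (QuotientGroup.mk g₁ : G ⧸ H) (γ2 * γ3) : Sp G H l)
            - (c (QuotientGroup.mk g₁ : G ⧸ H) γ2 : Sp G H l) = 0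
        exact cocycle_coe' G H hc g₁ γ2 γ3
  · refine ⟨0, ?_⟩
    intro γ1 γ2
    have hz0 : γ1 • (0 : fixedBy H (Sp G H l)) = 0 := smul_zero γ1
    show projF G H l ⟨(0, (c γ1 γ2 : Sp G H l)), sp_embed_mem G H l (c γ1 γ2)⟩ - c γ1 γ2
        = γ1 • (0 : fixedBy H (Sp G H l)) - 0 + 0
    rw [hz0]
    have : projF G H l ⟨(0, (c γ1 γ2 : Sp G H l)), sp_embed_mem G H l (c γ1 γ2)⟩
        = c γ1 γ2 := Subtype.ext rfl
    rw [this]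
    abel

end Proof4g
section Proof4h
set_option linter.unusedSectionVars false
set_option synthInstance.maxHeartbeats 1000000
set_option maxHeartbeats 1000000

variable (G : Type) [Group G] [Fintype G] [DecidableEq G] (H : Subgroup G) [H.Normal]
  (l : ℕ)

lemma projF_H2_inj (f : (G ⧸ H) → (G ⧸ H) → fixedBy H (Dp G H l)) (hf : IsTwoCocycle f)
    (hb : IsTwoCoboundary (fun a b => projF G H l (f a b))) : IsTwoCoboundary f := by
  obtain ⟨a, ha⟩ := hb
  set aD : (G ⧸ H) → fixedBy H (Dp G H l) :=
    fun γ => ⟨(0, (a γ : Sp G H l)), sp_embed_mem G H l (a γ)⟩ with haDdef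
  have hpaD : ∀ γ, projF G H l (aD γ) = a γ := fun γ => Subtype.ext rfl
  set r : (G ⧸ H) → (G ⧸ H) → fixedBy H (Dp G H l) :=
    fun γ1 γ2 => f γ1 γ2 - (γ1 • aD γ2 - aD (γ1 * γ2) + aD γ1) with hrdef
  have hrc : IsTwoCocycle r := hf.sub' (isTwoCocycle_delta aD)
  have hrz : ∀ γ1 γ2, projF G H l (r γ1 γ2) = 0 := by
    intro γ1 γ2
    have e : r γ1 γ2 = f γ1 γ2 - (γ1 • aD γ2 - aD (γ1 * γ2) + aD γ1) := rfl
    rw [e]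
    simp only [projF_sub, projF_add, projF_smul, hpaD]
    exact sub_eq_zero.mpr (ha γ1 γ2)
  set u : (G ⧸ H) → (G ⧸ H) → (((G ⧸ H) × G) → ℤ) :=
    fun γ1 γ2 => (r γ1 γ2 : Dp G H l).1 with hudef
  have hrcoe : ∀ γ1 γ2, (r γ1 γ2 : Dp G H l) = (u γ1 γ2, 0) := by
    intro γ1 γ2
    refine Prod.ext rfl ?_
    have := congrArg (fun z : fixedBy H (Sp G H l) => (z : Sp G H l)) (hrz γ1 γ2)
    simpa [projF_coe] using this
  have hu : ∀ (g₁ : G) (γ2 γ3 : G ⧸ H) (τ : G ⧸ H) (b : G),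
      u γ2 γ3 (g₁⁻¹ • τ, g₁⁻¹ * b) - u ((QuotientGroup.mk g₁ : G ⧸ H) * γ2) γ3 (τ, b)
        + u (QuotientGroup.mk g₁ : G ⧸ H) (γ2 * γ3) (τ, b)
        - u (QuotientGroup.mk g₁ : G ⧸ H) γ2 (τ, b) = 0 := by
    intro g₁ γ2 γ3 τ b
    have h1 := cocycle_coe' G H hrc g₁ γ2 γ3
    rw [hrcoe, hrcoe, hrcoe, hrcoe] at h1
    have h2 := congrFun (congrArg Prod.fst h1) (τ, b)
    simp only [Prod.fst_sub, Prod.fst_add, Prod.smul_fst, Prod.fst_zero,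
      Pi.sub_apply, Pi.add_apply, Pi.zero_apply, funAction_smul_apply,
      Prod.smul_mk, smul_eq_mul] at h2
    exact h2
  have hconc := coindD2 G H u hu
  set b : (G ⧸ H) → (((G ⧸ H) × G) → ℤ) :=
    fun γ p => u (QuotientGroup.mk p.2⁻¹ : G ⧸ H) γ (p.2⁻¹ • p.1, 1) with hbdef
  have hbfix : ∀ γ, ((b γ, 0) : Dp G H l) ∈ fixedBy H (Dp G H l) := by
    intro γ h hh
    refine Prod.ext ?_ (smul_zero h)
    show h • b γ = b γ
    funext p
    rw [funAction_smul_apply]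
    show u (QuotientGroup.mk (h⁻¹ • p).2⁻¹ : G ⧸ H) γ ((h⁻¹ • p).2⁻¹ • (h⁻¹ • p).1, 1)
      = u (QuotientGroup.mk p.2⁻¹ : G ⧸ H) γ (p.2⁻¹ • p.1, 1)
    have e2 : (h⁻¹ • p).2 = h⁻¹ * p.2 := rfl
    have e1 : (h⁻¹ • p).1 = h⁻¹ • p.1 := rfl
    rw [e1, e2, mul_inv_rev, inv_inv]
    have emk : (QuotientGroup.mk (p.2⁻¹ * h) : G ⧸ H) = QuotientGroup.mk p.2⁻¹ := by
      rw [QuotientGroup.mk_mul, (QuotientGroup.eq_one_iff h).mpr hh, mul_one]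
    rw [emk, mul_smul, smul_inv_smul]
  set B : (G ⧸ H) → fixedBy H (Dp G H l) := fun γ => ⟨(b γ, 0), hbfix γ⟩ with hBdef
  have hBcoe : ∀ γ, (B γ : Dp G H l) = (b γ, 0) := fun _ => rfl
  refine ⟨fun γ => aD γ + B γ, ?_⟩
  intro γ1 γ2
  have hδB : γ1 • B γ2 - B (γ1 * γ2) + B γ1 = r γ1 γ2 := by
    induction γ1 using QuotientGroup.induction_on with
    | H g₁ =>
      apply Subtype.ext
      rw [hrcoe]
      have hL : (((QuotientGroup.mk g₁ : G ⧸ H) • B γ2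
            - B ((QuotientGroup.mk g₁ : G ⧸ H) * γ2)
            + B (QuotientGroup.mk g₁ : G ⧸ H) : fixedBy H (Dp G H l)) : Dp G H l)
          = g₁ • ((b γ2, 0) : Dp G H l) - (b ((QuotientGroup.mk g₁ : G ⧸ H) * γ2), 0)
            + (b (QuotientGroup.mk g₁ : G ⧸ H), 0) := by
        simp [hBcoe, fixedBy_mk_smul H (Dp G H l)]
      rw [hL]
      refine Prod.ext ?_ ?_
      · show g₁ • b γ2 - b ((QuotientGroup.mk g₁ : G ⧸ H) * γ2)
            + b (QuotientGroup.mk g₁ : G ⧸ H) = u (QuotientGroup.mk g₁ : G ⧸ H) γ2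
        funext p
        obtain ⟨τ, c⟩ := p
        have h3 := hconc (QuotientGroup.mk g₁ : G ⧸ H) γ2 τ c
        simp only [Pi.sub_apply, Pi.add_apply, funAction_smul_apply]
        show b γ2 (g₁⁻¹ • (τ, c)) - b ((QuotientGroup.mk g₁ : G ⧸ H) * γ2) (τ, c)
            + b (QuotientGroup.mk g₁ : G ⧸ H) (τ, c) = u (QuotientGroup.mk g₁ : G ⧸ H) γ2 (τ, c)
        have e4 : b γ2 (g₁⁻¹ • (τ, c))
            = u ((QuotientGroup.mk c⁻¹ : G ⧸ H) * (QuotientGroup.mk g₁ : G ⧸ H)) γ2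
                (c⁻¹ • τ, 1) := by
          show u (QuotientGroup.mk (g₁⁻¹ • (τ, c)).2⁻¹ : G ⧸ H) γ2
              ((g₁⁻¹ • (τ, c)).2⁻¹ • (g₁⁻¹ • (τ, c)).1, 1) = _
          have e2 : (g₁⁻¹ • (τ, c)).2 = g₁⁻¹ * c := rfl
          have e1 : (g₁⁻¹ • (τ, c)).1 = g₁⁻¹ • τ := rfl
          rw [e1, e2, mul_inv_rev, inv_inv, mul_smul, smul_inv_smul,
            QuotientGroup.mk_mul]
        have e5 : b ((QuotientGroup.mk g₁ : G ⧸ H) * γ2) (τ, c)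
            = u (QuotientGroup.mk c⁻¹ : G ⧸ H)
                ((QuotientGroup.mk g₁ : G ⧸ H) * γ2) (c⁻¹ • τ, 1) := rfl
        have e6 : b (QuotientGroup.mk g₁ : G ⧸ H) (τ, c)
            = u (QuotientGroup.mk c⁻¹ : G ⧸ H) (QuotientGroup.mk g₁ : G ⧸ H)
                (c⁻¹ • τ, 1) := rfl
        rw [e4, e5, e6]
        linarith
      · show g₁ • (0 : (G → ℤ) × (Om G H l → ℤ)) - 0 + 0 = 0
        simp
  have hrr : f γ1 γ2 = r γ1 γ2 + (γ1 • aD γ2 - aD (γ1 * γ2) + aD γ1) := by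
    have e : r γ1 γ2 = f γ1 γ2 - (γ1 • aD γ2 - aD (γ1 * γ2) + aD γ1) := rfl
    rw [e]; abel
  rw [hrr, ← hδB, smul_add]
  beta_reduce
  abel

end Proof4h

/-- With `G` a finite group of order `n`, `H` a normal subgroup, `l > 0`,
`e' = gcd(n, l·[G:H])`, `n ∤ l·[G:H]`, `T' = coker(f' : ℤ[G/H] → D')` and
`S' = ℤ[G] ⊕ ℤ[Ω]`: the quotient map `D' → T'` restricts to a surjection
`(D')^H → (T')^H` on `H`-invariants, and this map together with the projection
`(D')^H → (S')^H` induce isomorphisms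
`H²(G/H, (T')^H) ≅ H²(G/H, (D')^H) ≅ H²(G/H, (S')^H)`.  (The bijectivity of the two
induced maps on `H²` is expressed at the level of 2-cocycles: injectivity says a cocycle
whose image is a coboundary is a coboundary; surjectivity says every cocycle is, up to a
coboundary, the image of a cocycle.) -/
theorem stmt4 (G : Type) [Group G] [Fintype G] [DecidableEq G]
    (H : Subgroup G) [H.Normal] (l : ℕ) (hl : 0 < l)
    (hndvd : ¬ (Fintype.card G ∣ l * H.index)) :
    Function.Surjective (quotF G H l) ∧
    ((∀ f : (G ⧸ H) → (G ⧸ H) → fixedBy H (Dp G H l), IsTwoCocycle f →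
        IsTwoCoboundary (fun a b => quotF G H l (f a b)) → IsTwoCoboundary f) ∧
      (∀ c : (G ⧸ H) → (G ⧸ H) → fixedBy H (Tp G H l), IsTwoCocycle c →
        ∃ f : (G ⧸ H) → (G ⧸ H) → fixedBy H (Dp G H l), IsTwoCocycle f ∧
          IsTwoCoboundary (fun a b => quotF G H l (f a b) - c a b))) ∧
    ((∀ f : (G ⧸ H) → (G ⧸ H) → fixedBy H (Dp G H l), IsTwoCocycle f →
        IsTwoCoboundary (fun a b => projF G H l (f a b)) → IsTwoCoboundary f) ∧
      (∀ c : (G ⧸ H) → (G ⧸ H) → fixedBy H (Sp G H l), IsTwoCocycle c →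
        ∃ f : (G ⧸ H) → (G ⧸ H) → fixedBy H (Dp G H l), IsTwoCocycle f ∧
          IsTwoCoboundary (fun a b => projF G H l (f a b) - c a b))) := by
  exact ⟨quotF_surj G H l,
    ⟨fun f hf hb => quotF_H2_inj G H l f hf hb,
     fun c hc => quotF_H2_surj G H l c hc⟩,
    ⟨fun f hf hb => projF_H2_inj G H l f hf hb,
     fun c hc => projF_H2_surj G H l c hc⟩⟩

end Normic
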